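/- In Blackwell's example, if p is a probability distribution on states assigning positive probability to every primary state, then for any ε < 1 there is no stationary plan f with p{I(f) > u* − ε} = 1; i.e., no (p,ε)-optimal stationary plan exists. -/

import Mathlib

open MeasureTheory
open scoped ENNReal

/-- States of Blackwell's example: primary states `p n`, secondary states `s n`
(meaningful for `n ≥ 1`), and the terminal state `t`. -/
inductive BS
  | p : ℕ → BS
  | s : ℕ → BS
  | t : BS
  deriving DecidableEq

instance : MeasurableSpace BS := ⊤
instance : Inhabited BS := ⟨BS.t⟩

/-- Actions: `cont` (move to the next primary state or terminal, each w.p. 1/2) and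
`switch` (move to the secondary state `s (2^n - 1)`).  In secondary and terminal
states both actions have the same effect. -/
inductive Act
  | cont : Act
  | switch : Act
  deriving DecidableEq

instance : MeasurableSpace Act := ⊤
instance : Inhabited Act := ⟨Act.cont⟩

/-- Transition law of Blackwell's example. -/
noncomputable def bq : BS → Act → Measure BS
  | .p n, .cont => (1 / 2 : ℝ≥0∞) • Measure.dirac (.p (n + 1)) +
      (1 / 2 : ℝ≥0∞) • Measure.dirac .t
  | .p n, .switch => Measure.dirac (.s (2 ^ n - 1))
  | .s n, _ => Measure.dirac (if n ≤ 1 then .t else .s (n - 1))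
  | .t, _ => Measure.dirac .t

/-- Reward function: each step in a secondary state pays 1, all other steps pay 0
(the income `2^n - 1` of choosing `switch` at `p n` is collected along the
secondary chain `s (2^n - 1) → ⋯ → s 1 → t`). -/
noncomputable def br : BS → Act → BS → ℝ
  | .s _, _, _ => 1
  | _, _, _ => 0

/-- Finite-horizon expected return of a (history-dependent, randomized) plan. -/
noncomputable def finVal {S A : Type*} [MeasurableSpace S] [MeasurableSpace A] [Inhabited S]
    (q : S → A → Measure S) (r : S → A → S → ℝ)
    (π : List S → Measure A) : ℕ → List S → ℝ
  | 0, _ => 0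
  | n + 1, h => ∫ a, ∫ y, (r h.headI a y + finVal q r π n (y :: h)) ∂(q h.headI a) ∂(π h)

/-- Total expected (undiscounted) return `I(π)(s)` of the plan `π` from state `s`. -/
noncomputable def totalReturn {S A : Type*} [MeasurableSpace S] [MeasurableSpace A] [Inhabited S]
    (q : S → A → Measure S) (r : S → A → S → ℝ)
    (π : List S → Measure A) (s : S) : ℝ :=
  ⨆ n : ℕ, finVal q r π n [s]

/-- The plan associated with a stationary plan `f : BS → Act`. -/
noncomputable def stationaryPlan (f : BS → Act) : List BS → Measure Act :=
  fun h => Measure.dirac (f h.headI)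

/-- Optimal return `u*(s) = sup_π I(π)(s)` in Blackwell's example. -/
noncomputable def ustar (s : BS) : ℝ :=
  ⨆ π : {π : List BS → Measure Act // ∀ h, IsProbabilityMeasure (π h)},
    totalReturn bq br π.1 s
section BlackwellProof

lemma integrable_bs (f : BS → ℝ) (x : BS) : Integrable f (Measure.dirac x) := by
  refine ⟨(Measurable.of_discrete.stronglyMeasurable).aestronglyMeasurable, ?_⟩
  rw [HasFiniteIntegral, MeasureTheory.lintegral_dirac]
  exact ENNReal.coe_lt_top

lemma integral_mix (f : BS → ℝ) (a b : BS) :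
    ∫ y, f y ∂((1/2 : ℝ≥0∞) • Measure.dirac a + (1/2 : ℝ≥0∞) • Measure.dirac b)
      = (1/2) * f a + (1/2) * f b := by
  rw [integral_add_measure ((integrable_bs f a).smul_measure (by norm_num))
      ((integrable_bs f b).smul_measure (by norm_num)),
    integral_smul_measure, integral_smul_measure, integral_dirac, integral_dirac]
  norm_num

lemma fv_stationary (g : BS → Act) (N : ℕ) (h : List BS) :
    finVal bq br (stationaryPlan g) (N+1) h =
      ∫ y, (br h.headI (g h.headI) y + finVal bq br (stationaryPlan g) N (y::h))
        ∂ bq h.headI (g h.headI) := by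
  show (∫ a, _ ∂ Measure.dirac (g h.headI)) = _
  rw [integral_dirac]

lemma br_nonneg (x : BS) (a : Act) (y : BS) : 0 ≤ br x a y := by
  cases x <;> simp [br]

/-- Upper bound function. -/
noncomputable def Bnd : BS → ℝ
  | .p m => 2 ^ m
  | .s j => max (j : ℝ) 1
  | .t => 0

lemma Bnd_nonneg (x : BS) : 0 ≤ Bnd x := by
  cases x <;> simp [Bnd] <;> positivity

lemma fv_nonneg (π : List BS → Measure Act) :
    ∀ (N : ℕ) (h : List BS), 0 ≤ finVal bq br π N h := by
  intro N
  induction N with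
  | zero => intro h; exact le_refl 0
  | succ N ih =>
    intro h
    refine integral_nonneg fun a => integral_nonneg fun y => ?_
    exact add_nonneg (br_nonneg _ _ _) (ih _)

lemma fv_le_Bnd (π : List BS → Measure Act) (hπ : ∀ h, IsProbabilityMeasure (π h)) :
    ∀ (N : ℕ) (h : List BS), finVal bq br π N h ≤ Bnd h.headI := by
  intro N
  induction N with
  | zero => intro h; exact Bnd_nonneg _
  | succ N ih =>
    intro h
    have inner : ∀ a : Act,
        ∫ y, (br h.headI a y + finVal bq br π N (y::h)) ∂ bq h.headI a ≤ Bnd h.headI := by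
      intro a
      cases hx : h.headI with
      | p m =>
        cases a with
        | cont =>
          show ∫ y, (br (BS.p m) Act.cont y + finVal bq br π N (y::h))
              ∂ ((1/2 : ℝ≥0∞) • Measure.dirac (BS.p (m+1)) + (1/2 : ℝ≥0∞) • Measure.dirac BS.t)
              ≤ Bnd (BS.p m)
          rw [integral_mix]
          have h1 := ih (BS.p (m+1) :: h)
          have h2 := ih (BS.t :: h)
          simp only [List.headI, Bnd] at h1 h2 ⊢
          have hbr1 : br (BS.p m) Act.cont (BS.p (m+1)) = 0 := rfl
          have hbr2 : br (BS.p m) Act.cont BS.t = 0 := rfl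
          rw [hbr1, hbr2]
          have hp : (2:ℝ) ^ (m+1) = 2 * 2 ^ m := by ring
          rw [hp] at h1
          linarith
        | switch =>
          show ∫ y, (br (BS.p m) Act.switch y + finVal bq br π N (y::h))
              ∂ (Measure.dirac (BS.s (2^m - 1))) ≤ Bnd (BS.p m)
          rw [integral_dirac]
          have h1 := ih (BS.s (2^m - 1) :: h)
          simp only [List.headI, Bnd] at h1 ⊢
          have hbr : br (BS.p m) Act.switch (BS.s (2^m - 1)) = 0 := rfl
          rw [hbr, zero_add]
          refine h1.trans (max_le ?_ ?_)
          · have : ((2^m - 1 : ℕ) : ℝ) ≤ ((2^m : ℕ) : ℝ) := by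
              exact_mod_cast Nat.sub_le _ _
            simpa using this
          · exact one_le_pow₀ (by norm_num)
      | s j =>
        have hbq : bq (BS.s j) a = Measure.dirac (if j ≤ 1 then BS.t else BS.s (j-1)) := by
          cases a <;> rfl
        rw [hx] at *
        show ∫ y, (br (BS.s j) a y + finVal bq br π N (y::h)) ∂ bq (BS.s j) a ≤ Bnd (BS.s j)
        rw [hbq, integral_dirac]
        have hbr : ∀ y, br (BS.s j) a y = 1 := fun y => rfl
        rw [hbr]
        by_cases hj : j ≤ 1
        · rw [if_pos hj]
          have h1 := ih (BS.t :: h)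
          simp only [List.headI, Bnd] at h1 ⊢
          have : (1:ℝ) + finVal bq br π N (BS.t :: h) ≤ 1 + 0 := by linarith
          exact this.trans (by simp)
        · rw [if_neg hj]
          have h1 := ih (BS.s (j-1) :: h)
          simp only [List.headI, Bnd] at h1 ⊢
          have hj2 : 2 ≤ j := by omega
          have hcast : ((j - 1 : ℕ) : ℝ) = (j : ℝ) - 1 := by
            push_cast [Nat.cast_sub (by omega : 1 ≤ j)]; ring
          have hmax : max ((j-1 : ℕ) : ℝ) 1 = (j : ℝ) - 1 := by
            rw [hcast]
            refine max_eq_left ?_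
            have : (2:ℝ) ≤ (j:ℝ) := by exact_mod_cast hj2
            linarith
          rw [hmax] at h1
          have : (1:ℝ) + finVal bq br π N (BS.s (j-1) :: h) ≤ (j:ℝ) := by linarith
          exact this.trans (le_max_left _ _)
      | t =>
        show ∫ y, (br BS.t a y + finVal bq br π N (y::h)) ∂ (Measure.dirac BS.t) ≤ Bnd BS.t
        rw [integral_dirac]
        have h1 := ih (BS.t :: h)
        simp only [List.headI, Bnd] at h1 ⊢
        have hbr : br BS.t a BS.t = 0 := rfl
        rw [hbr, zero_add]
        exact h1
    haveI := hπ h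
    calc finVal bq br π (N+1) h
        = ∫ a, (∫ y, (br h.headI a y + finVal bq br π N (y::h)) ∂ bq h.headI a) ∂ π h := rfl
      _ ≤ ∫ _a, Bnd h.headI ∂ π h := by
          refine integral_mono_of_nonneg (ae_of_all _ fun a => ?_) (integrable_const _)
            (ae_of_all _ inner)
          exact integral_nonneg fun y => add_nonneg (br_nonneg _ _ _) (fv_nonneg _ _ _)
      _ = Bnd h.headI := by simp

end BlackwellProof

lemma fv_t (g : BS → Act) : ∀ (N : ℕ) (h : List BS), h.headI = BS.t →
    finVal bq br (stationaryPlan g) N h = 0 := by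
  intro N
  induction N with
  | zero => intro h _; rfl
  | succ N ih =>
    intro h hh
    rw [fv_stationary, hh]
    show ∫ y, (br BS.t (g BS.t) y + _) ∂ (Measure.dirac BS.t) = 0
    rw [integral_dirac]
    have hbr : br BS.t (g BS.t) BS.t = 0 := rfl
    rw [hbr, zero_add]
    exact ih _ rfl

lemma fv_s_exact (g : BS → Act) : ∀ (N j : ℕ) (h : List BS), N ≤ j → h.headI = BS.s j →
    finVal bq br (stationaryPlan g) N h = N := by
  intro N
  induction N with
  | zero => intro j h _ _; simp [finVal]
  | succ N ih =>
    intro j h hNj hh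
    rw [fv_stationary, hh]
    have hbq : bq (BS.s j) (g (BS.s j)) = Measure.dirac (if j ≤ 1 then BS.t else BS.s (j-1)) := by
      cases (g (BS.s j)) <;> rfl
    rw [hbq, integral_dirac]
    have hbr : ∀ y, br (BS.s j) (g (BS.s j)) y = 1 := fun _ => rfl
    rw [hbr]
    by_cases hj : j ≤ 1
    · have hN : N = 0 := by omega
      rw [if_pos hj, fv_t g N (BS.t :: h) rfl, hN]
      norm_num
    · rw [if_neg hj, ih (j-1) (BS.s (j-1) :: h) (by omega) rfl]
      push_cast
      ring

/-- The plan that continues until state `p M` and then switches. -/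
def gM (M : ℕ) : BS → Act := fun x =>
  match x with
  | .p m => if m < M then .cont else .switch
  | _ => .cont

lemma fv_gM (M : ℕ) (hM : 1 ≤ M) :
    ∀ (d : ℕ) (m : ℕ) (h : List BS), m + d = M → h.headI = BS.p m →
    finVal bq br (stationaryPlan (gM M)) (d + 2^M) h = ((2:ℝ)^M - 1) / 2^d := by
  intro d
  induction d with
  | zero =>
    intro m h hm hh
    have hmM : m = M := by omega
    rw [hmM] at hh
    have hg : gM M (BS.p M) = Act.switch := by simp [gM]
    have h2 : (0 + 2^M) = (2^M - 1) + 1 := by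
      have := Nat.one_le_two_pow (n := M); omega
    rw [h2, fv_stationary, hh, hg]
    show ∫ y, (br (BS.p M) Act.switch y + _) ∂ (Measure.dirac (BS.s (2^M - 1))) = _
    rw [integral_dirac]
    have hbr : br (BS.p M) Act.switch (BS.s (2^M - 1)) = 0 := rfl
    rw [hbr, zero_add, fv_s_exact (gM M) (2^M - 1) (2^M - 1) (BS.s (2^M - 1) :: h) le_rfl rfl]
    have h1 : (1:ℕ) ≤ 2^M := Nat.one_le_two_pow
    push_cast [h1]
    norm_num
  | succ d ih =>
    intro m h hm hh
    have hmM : m < M := by omega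
    have hg : gM M (BS.p m) = Act.cont := by simp [gM, hmM]
    have h2 : (d + 1 + 2^M) = (d + 2^M) + 1 := by ring
    rw [h2, fv_stationary, hh, hg]
    show ∫ y, (br (BS.p m) Act.cont y + _)
        ∂ ((1/2 : ℝ≥0∞) • Measure.dirac (BS.p (m+1)) + (1/2 : ℝ≥0∞) • Measure.dirac BS.t) = _
    rw [integral_mix]
    have hbr1 : br (BS.p m) Act.cont (BS.p (m+1)) = 0 := rfl
    have hbr2 : br (BS.p m) Act.cont BS.t = 0 := rfl
    rw [hbr1, hbr2, ih (m+1) (BS.p (m+1) :: h) (by omega) rfl,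
      fv_t (gM M) (d + 2^M) (BS.t :: h) rfl]
    rw [pow_succ]
    ring

lemma ret_le_Bnd (π : List BS → Measure Act) (hπ : ∀ h, IsProbabilityMeasure (π h)) (s : BS) :
    totalReturn bq br π s ≤ Bnd s := by
  refine ciSup_le fun N => ?_
  simpa using fv_le_Bnd π hπ N [s]

lemma bddAbove_fv (π : List BS → Measure Act) (hπ : ∀ h, IsProbabilityMeasure (π h)) (s : BS) :
    BddAbove (Set.range fun N => finVal bq br π N [s]) := by
  refine ⟨Bnd s, ?_⟩
  rintro _ ⟨N, rfl⟩
  simpa using fv_le_Bnd π hπ N [s]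

lemma stationary_prob (g : BS → Act) : ∀ h, IsProbabilityMeasure (stationaryPlan g h) :=
  fun _ => Measure.dirac.isProbabilityMeasure

lemma ustar_ge (g : BS → Act) (s : BS) :
    totalReturn bq br (stationaryPlan g) s ≤ ustar s := by
  have hbdd : BddAbove (Set.range fun π :
      {π : List BS → Measure Act // ∀ h, IsProbabilityMeasure (π h)} =>
      totalReturn bq br π.1 s) := by
    refine ⟨Bnd s, ?_⟩
    rintro _ ⟨π, rfl⟩
    exact ret_le_Bnd π.1 π.2 s
  exact le_ciSup hbdd ⟨stationaryPlan g, stationary_prob g⟩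

lemma ustar_lower (n k : ℕ) (hn : 1 ≤ n) :
    (2:ℝ)^n - (1/2)^k ≤ ustar (BS.p n) := by
  have hM : 1 ≤ n + k := by omega
  have hfv := fv_gM (n + k) hM k n [BS.p n] rfl rfl
  have h1 : finVal bq br (stationaryPlan (gM (n+k))) (k + 2^(n+k)) [BS.p n]
      ≤ totalReturn bq br (stationaryPlan (gM (n+k))) (BS.p n) :=
    le_ciSup (bddAbove_fv _ (stationary_prob _) _) (k + 2^(n+k))
  have h2 := (h1.trans (ustar_ge (gM (n+k)) (BS.p n)))
  rw [hfv] at h2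
  have heq : ((2:ℝ)^(n+k) - 1) / 2^k = 2^n - (1/2)^k := by
    rw [pow_add]
    field_simp
    have hk2 : (2:ℝ)^k * (1/2)^k = 1 := by rw [← mul_pow]; norm_num
    rw [mul_sub, hk2]; ring
  rw [heq] at h2
  exact h2

lemma retA (f : BS → Act) (n : ℕ) (hn : 1 ≤ n) (hsw : f (BS.p n) = Act.switch) :
    totalReturn bq br (stationaryPlan f) (BS.p n) ≤ 2^n - 1 := by
  refine ciSup_le fun N => ?_
  cases N with
  | zero =>
    have : (1:ℝ) ≤ 2^n := one_le_pow₀ (by norm_num)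
    show (0:ℝ) ≤ _
    linarith [one_lt_pow₀ (a := (2:ℝ)) (by norm_num) (by omega : n ≠ 0)]
  | succ N =>
    rw [fv_stationary]
    simp only [List.headI]
    rw [hsw]
    show ∫ y, (br (BS.p n) Act.switch y + _) ∂ (Measure.dirac (BS.s (2^n - 1))) ≤ _
    rw [integral_dirac]
    have hbr : br (BS.p n) Act.switch (BS.s (2^n - 1)) = 0 := rfl
    rw [hbr, zero_add]
    have h1 := fv_le_Bnd (stationaryPlan f) (stationary_prob f) N (BS.s (2^n - 1) :: [BS.p n])
    simp only [List.headI, Bnd] at h1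
    refine h1.trans ?_
    have h2 : (1:ℕ) ≤ 2^n := Nat.one_le_two_pow
    have h3 : ((2^n - 1 : ℕ) : ℝ) = (2:ℝ)^n - 1 := by push_cast [h2]; norm_num
    rw [h3]
    refine max_le le_rfl ?_
    have : (2:ℝ)^1 ≤ 2^n := pow_le_pow_right₀ (by norm_num) hn
    norm_num at this ⊢
    linarith

lemma retB (f : BS → Act) (hf : ∀ m, 1 ≤ m → f (BS.p m) = Act.cont) :
    totalReturn bq br (stationaryPlan f) (BS.p 1) = 0 := by
  have key : ∀ (N : ℕ) (h : List BS),
      ((∃ m, 1 ≤ m ∧ h.headI = BS.p m) ∨ h.headI = BS.t) →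
      finVal bq br (stationaryPlan f) N h = 0 := by
    intro N
    induction N with
    | zero => intro h _; rfl
    | succ N ih =>
      rintro h (⟨m, hm, hh⟩ | hh)
      · rw [fv_stationary, hh, hf m hm]
        show ∫ y, (br (BS.p m) Act.cont y + _)
            ∂ ((1/2 : ℝ≥0∞) • Measure.dirac (BS.p (m+1)) + (1/2 : ℝ≥0∞) • Measure.dirac BS.t) = 0
        rw [integral_mix]
        have hbr1 : br (BS.p m) Act.cont (BS.p (m+1)) = 0 := rfl
        have hbr2 : br (BS.p m) Act.cont BS.t = 0 := rfl
        rw [hbr1, hbr2, ih (BS.p (m+1) :: h) (Or.inl ⟨m+1, by omega, rfl⟩),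
          ih (BS.t :: h) (Or.inr rfl)]
        ring
      · exact fv_t f (N+1) h hh
  have : ∀ N : ℕ, finVal bq br (stationaryPlan f) N [BS.p 1] = 0 := fun N =>
    key N [BS.p 1] (Or.inl ⟨1, le_rfl, rfl⟩)
  unfold totalReturn
  simp only [this]
  exact ciSup_const

/-- In Blackwell's example, if `p` assigns positive probability to every primary state,
then for any `ε < 1` there is no `(p,ε)`-optimal stationary plan: no stationary `f`
satisfies `I(f) > u* - ε` with `p`-probability 1. -/
theorem blackwell_no_p_eps_optimal_stationary
    (μ : Measure BS) [IsProbabilityMeasure μ]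
    (hμ : ∀ n : ℕ, 1 ≤ n → 0 < μ {BS.p n})
    (ε : ℝ) (hε0 : 0 < ε) (hε1 : ε < 1) :
    ¬ ∃ f : BS → Act,
        μ {x : BS | ustar x - ε < totalReturn bq br (stationaryPlan f) x} = 1 := by
  rintro ⟨f, hf1⟩
  -- choose k with (1/2)^k < 1 - ε
  obtain ⟨k, hk⟩ := exists_pow_lt_of_lt_one (by linarith : (0:ℝ) < 1 - ε)
    (by norm_num : (1:ℝ)/2 < 1)
  -- find a primary state where f is far from optimal
  have key : ∃ n : ℕ, 1 ≤ n ∧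
      totalReturn bq br (stationaryPlan f) (BS.p n) ≤ ustar (BS.p n) - ε := by
    by_cases H : ∃ m, 1 ≤ m ∧ f (BS.p m) = Act.switch
    · obtain ⟨n, hn, hsw⟩ := H
      refine ⟨n, hn, ?_⟩
      have h1 := retA f n hn hsw
      have h2 := ustar_lower n k hn
      linarith
    · push_neg at H
      have hcont : ∀ m, 1 ≤ m → f (BS.p m) = Act.cont := by
        intro m hm
        cases hfm : f (BS.p m) with
        | cont => rfl
        | switch => exact absurd hfm (H m hm)
      refine ⟨1, le_rfl, ?_⟩
      rw [retB f hcont]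
      have h2 := ustar_lower 1 k le_rfl
      norm_num at h2 ⊢
      linarith
  obtain ⟨n, hn, hfar⟩ := key
  -- the bad state is not in the good set
  have hnotin : BS.p n ∉ {x : BS | ustar x - ε < totalReturn bq br (stationaryPlan f) x} := by
    simp only [Set.mem_setOf_eq, not_lt]
    linarith
  -- measure contradiction
  have hdisj : Disjoint {x : BS | ustar x - ε < totalReturn bq br (stationaryPlan f) x}
      {BS.p n} := by
    rw [Set.disjoint_singleton_right]
    exact hnotin
  have hle : (1:ℝ≥0∞) + μ {BS.p n} ≤ 1 := by
    calc (1:ℝ≥0∞) + μ {BS.p n}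
        = μ {x : BS | ustar x - ε < totalReturn bq br (stationaryPlan f) x} + μ {BS.p n} := by
          rw [hf1]
      _ = μ ({x : BS | ustar x - ε < totalReturn bq br (stationaryPlan f) x} ∪ {BS.p n}) := by
          rw [measure_union hdisj MeasurableSet.of_discrete]
      _ ≤ μ Set.univ := measure_mono (Set.subset_univ _)
      _ = 1 := measure_univ
  have h0 : μ {BS.p n} ≤ 0 := by
    have hle' : (1:ℝ≥0∞) + μ {BS.p n} ≤ 1 + 0 := by simpa using hle
    simpa using ENNReal.le_of_add_le_add_left (by norm_num : (1:ℝ≥0∞) ≠ ⊤) hle'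
  exact absurd (le_antisymm h0 (by positivity)) (hμ n hn).ne'
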